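/- Let Γ be a group acting by homeomorphisms on a compact metric space Z with at least 3 points. Then the following are equivalent: (i) the diagonal action of Γ on Trip(Z) is properly discontinuous; (ii) for every sequence (γ_n) in Γ diverging to infinity there exist points z₊, z₋ ∈ Z and a subsequence (γ_{n_k}) such that the maps γ_{n_k} converge to the constant map with value z₊ uniformly on every compact subset of Z ∖ {z₋}. -/

import Mathlib

open Filter Metric Set Topology

/-- A sequence in a group diverges to infinity if it eventually leaves every finite subset. -/
def DivergesToInfinity {G : Type*} (γ : ℕ → G) : Prop :=
  ∀ F : Finset G, {n : ℕ | γ n ∈ F}.Finite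

/-- The space of triples of pairwise distinct points. -/
def tripSet (Z : Type*) : Set (Z × Z × Z) :=
  {p | p.1 ≠ p.2.1 ∧ p.1 ≠ p.2.2 ∧ p.2.1 ≠ p.2.2}

section Aux

variable {G Z : Type*} [Group G] [MetricSpace Z] [MulAction G Z]

lemma aux_div_comp {γ : ℕ → G} (hγ : DivergesToInfinity γ) {σ : ℕ → ℕ}
    (hσ : Function.Injective σ) : DivergesToInfinity (fun n => γ (σ n)) := by
  intro F
  have h : {n : ℕ | γ (σ n) ∈ F} = σ ⁻¹' {m : ℕ | γ m ∈ F} := rfl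
  rw [h]
  exact Set.Finite.preimage hσ.injOn (hγ F)

lemma aux_div_inv {γ : ℕ → G} (hγ : DivergesToInfinity γ) :
    DivergesToInfinity (fun n => (γ n)⁻¹) := by
  classical
  intro F
  refine (hγ (F.image (·⁻¹))).subset ?_
  intro n hn
  simp only [Set.mem_setOf_eq, Finset.mem_image] at hn ⊢
  exact ⟨(γ n)⁻¹, hn, inv_inv _⟩

lemma aux_div_not_all {γ : ℕ → G} (hγ : DivergesToInfinity γ) {S : Set G}
    (hS : S.Finite) (h : ∀ n, γ n ∈ S) : False := by
  have h1 := hγ hS.toFinset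
  have h2 : {n : ℕ | γ n ∈ hS.toFinset} = Set.univ :=
    Set.eq_univ_of_forall fun n => by simpa [Set.Finite.mem_toFinset] using h n
  rw [h2] at h1
  exact Set.infinite_univ h1

lemma aux_ev_ne {x y : ℕ → Z} {a b : Z} (hx : Tendsto x atTop (𝓝 a))
    (hy : Tendsto y atTop (𝓝 b)) (hab : a ≠ b) : ∀ᶠ n in atTop, x n ≠ y n := by
  have hd : (0 : ℝ) < dist a b := dist_pos.2 hab
  have h1 := hx (Metric.ball_mem_nhds a (by linarith : (0:ℝ) < dist a b / 2))
  have h2 := hy (Metric.ball_mem_nhds b (by linarith : (0:ℝ) < dist a b / 2))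
  filter_upwards [h1, h2] with n e1 e2 he
  rw [Set.mem_preimage, Metric.mem_ball, he] at e1
  rw [Set.mem_preimage, Metric.mem_ball] at e2
  have h3 := dist_triangle a (y n) b
  rw [dist_comm a (y n)] at h3
  linarith

lemma aux_choose3 {a b c p q : Z} (hab : a ≠ b) (hac : a ≠ c) (hbc : b ≠ c) :
    ∃ r : Z, (r = a ∨ r = b ∨ r = c) ∧ r ≠ p ∧ r ≠ q := by
  by_cases h1 : a ≠ p ∧ a ≠ q
  · exact ⟨a, Or.inl rfl, h1⟩
  by_cases h2 : b ≠ p ∧ b ≠ q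
  · exact ⟨b, Or.inr (Or.inl rfl), h2⟩
  push_neg at h1 h2
  have ha : a = p ∨ a = q := by
    by_cases h : a = p
    · exact Or.inl h
    · exact Or.inr (h1 h)
  have hb : b = p ∨ b = q := by
    by_cases h : b = p
    · exact Or.inl h
    · exact Or.inr (h2 h)
  rcases ha with ha | ha <;> rcases hb with hb | hb
  · exact absurd (ha.trans hb.symm) hab
  · exact ⟨c, Or.inr (Or.inr rfl), fun h => hac (ha.trans h.symm),
      fun h => hbc (hb.trans h.symm)⟩
  · exact ⟨c, Or.inr (Or.inr rfl), fun h => hbc (hb.trans h.symm),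
      fun h => hac (ha.trans h.symm)⟩
  · exact absurd (ha.trans hb.symm) hab

end Aux

lemma aux_shift_mono (N : ℕ) : StrictMono (fun j : ℕ => j + N) :=
  fun a b h => by show a + N < b + N; omega

lemma aux_pigeon5 {Z : Type*} (a : Fin 5 → Z)
    (H : ∀ i j k : Fin 5, i ≠ j → i ≠ k → j ≠ k →
      (a i = a j ∨ a i = a k ∨ a j = a k)) :
    ∃ i j k : Fin 5, i ≠ j ∧ i ≠ k ∧ j ≠ k ∧ a i = a j ∧ a i = a k := by
  classical
  by_cases h3 : 2 < (Finset.univ.image a).card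
  · exfalso
    obtain ⟨x, y, z, hx, hy, hz, hxy, hxz, hyz⟩ := Finset.two_lt_card_iff.1 h3
    obtain ⟨i, -, hi⟩ := Finset.mem_image.1 hx
    obtain ⟨j, -, hj⟩ := Finset.mem_image.1 hy
    obtain ⟨k, -, hk⟩ := Finset.mem_image.1 hz
    have hij : i ≠ j := by rintro rfl; exact hxy (hi.symm.trans hj)
    have hik : i ≠ k := by rintro rfl; exact hxz (hi.symm.trans hk)
    have hjk : j ≠ k := by rintro rfl; exact hyz (hj.symm.trans hk)
    rcases H i j k hij hik hjk with h | h | h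
    · exact hxy (hi.symm.trans (h.trans hj))
    · exact hxz (hi.symm.trans (h.trans hk))
    · exact hyz (hj.symm.trans (h.trans hk))
  · push_neg at h3
    have h4 : (Finset.univ.image a).card * 2 < (Finset.univ : Finset (Fin 5)).card := by
      have h5 : (Finset.univ : Finset (Fin 5)).card = 5 := by simp
      omega
    obtain ⟨y, -, hy⟩ := Finset.exists_lt_card_fiber_of_mul_lt_card_of_maps_to
      (fun i _ => Finset.mem_image_of_mem a (Finset.mem_univ i)) h4
    obtain ⟨i, j, k, hi, hj, hk, hij, hik, hjk⟩ := Finset.two_lt_card_iff.1 hy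
    have ei : a i = y := (Finset.mem_filter.1 hi).2
    have ej : a j = y := (Finset.mem_filter.1 hj).2
    have ek : a k = y := (Finset.mem_filter.1 hk).2
    exact ⟨i, j, k, hij, hik, hjk, ei.trans ej.symm, ei.trans ek.symm⟩

section KeyL

variable {G Z : Type*} [Group G] [MetricSpace Z] [MulAction G Z]

lemma aux_keyL
    (hPD : ∀ K : Set (Z × Z × Z), K ⊆ tripSet Z → IsCompact K →
        {γ : G | ((fun p : Z × Z × Z => (γ • p.1, γ • p.2.1, γ • p.2.2)) '' K ∩ K).Nonempty}.Finite)
    (γ : ℕ → G) (hγ : DivergesToInfinity γ)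
    (p q : ℕ → Z × Z × Z)
    (hq : ∀ n, q n = (γ n • (p n).1, γ n • (p n).2.1, γ n • (p n).2.2))
    (hp : ∀ n, p n ∈ tripSet Z)
    {P Q : Z × Z × Z} (hP : P ∈ tripSet Z) (hQ : Q ∈ tripSet Z)
    (hlimp : Tendsto p atTop (𝓝 P)) (hlimq : Tendsto q atTop (𝓝 Q)) : False := by
  have hqtrip : ∀ n, q n ∈ tripSet Z := by
    intro n
    obtain ⟨h1, h2, h3⟩ := hp n
    rw [hq n]
    exact ⟨fun h => h1 (smul_left_cancel _ h), fun h => h2 (smul_left_cancel _ h),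
      fun h => h3 (smul_left_cancel _ h)⟩
  set K : Set (Z × Z × Z) := insert P (Set.range p) ∪ insert Q (Set.range q) with hK
  have hKsub : K ⊆ tripSet Z := by
    intro x hx
    rcases hx with hx | hx
    · rcases Set.mem_insert_iff.1 hx with rfl | ⟨n, rfl⟩
      · exact hP
      · exact hp n
    · rcases Set.mem_insert_iff.1 hx with rfl | ⟨n, rfl⟩
      · exact hQ
      · exact hqtrip n
  have hKcomp : IsCompact K :=
    (hlimp.isCompact_insert_range).union (hlimq.isCompact_insert_range)
  have hfin := hPD K hKsub hKcomp
  refine aux_div_not_all hγ hfin (fun n => ?_)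
  refine ⟨q n, ⟨p n, ?_, (hq n).symm⟩, ?_⟩
  · exact Or.inl (Set.mem_insert_of_mem _ ⟨n, rfl⟩)
  · exact Or.inr (Set.mem_insert_of_mem _ ⟨n, rfl⟩)

end KeyL

/-- The two definitions of a convergence action are equivalent: the diagonal action on the
space of triples of pairwise distinct points is properly discontinuous if and only if every
sequence diverging to infinity has a subsequence converging, uniformly on compact subsets of
the complement of an exceptional point, to a constant map. -/
theorem properly_discontinuous_on_triples_iff_convergence
    {G Z : Type*} [Group G] [MetricSpace Z] [CompactSpace Z] [MulAction G Z]
    (hcont : ∀ γ : G, Continuous fun z : Z => γ • z)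
    (hcard : ∃ a b c : Z, a ≠ b ∧ a ≠ c ∧ b ≠ c) :
    (∀ K : Set (Z × Z × Z), K ⊆ tripSet Z → IsCompact K →
        {γ : G | ((fun p : Z × Z × Z => (γ • p.1, γ • p.2.1, γ • p.2.2)) '' K ∩ K).Nonempty}.Finite)
      ↔
    (∀ γ : ℕ → G, DivergesToInfinity γ →
      ∃ (zp zm : Z) (k : ℕ → ℕ), StrictMono k ∧
        ∀ K : Set Z, IsCompact K → K ⊆ {zm}ᶜ →
          TendstoUniformlyOn (fun i z => γ (k i) • z) (fun _ => zp) atTop K) := by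
  constructor
  · -- hard direction
    intro hPD γ hγ
    rcases finite_or_infinite Z with hZfin | hZinf
    · -- Z finite: no divergent sequences can exist
      exfalso
      have hfin := hPD (tripSet Z) subset_rfl (Set.toFinite _).isCompact
      obtain ⟨a, b, c, hab, hac, hbc⟩ := hcard
      refine aux_div_not_all hγ hfin (fun n => ?_)
      refine ⟨(γ n • a, γ n • b, γ n • c), ⟨(a, b, c), ⟨hab, hac, hbc⟩, rfl⟩, ?_⟩
      exact ⟨fun h => hab (smul_left_cancel _ h), fun h => hac (smul_left_cancel _ h),
        fun h => hbc (smul_left_cancel _ h)⟩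
    · -- Z infinite
      set t : Fin 5 → Z := fun i => Infinite.natEmbedding Z i.val with ht_def
      have ht : Function.Injective t := by
        intro i j hij
        exact Fin.val_injective ((Infinite.natEmbedding Z).injective hij)
      set Φ : ℕ → (Fin 5 → Z × Z) := fun n i => (γ n • t i, (γ n)⁻¹ • t i) with hΦdef
      obtain ⟨L, -, φ, hφ, hΦ⟩ := isCompact_univ.tendsto_subseq (fun n => Set.mem_univ (Φ n))
      have hA : ∀ i, Tendsto (fun n => γ (φ n) • t i) atTop (𝓝 (L i).1) := by
        intro i
        exact (continuous_fst.tendsto (L i)).comp (tendsto_pi_nhds.1 hΦ i)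
      have hB : ∀ i, Tendsto (fun n => (γ (φ n))⁻¹ • t i) atTop (𝓝 (L i).2) := by
        intro i
        exact (continuous_snd.tendsto (L i)).comp (tendsto_pi_nhds.1 hΦ i)
      have hγ₁ : DivergesToInfinity (fun n => γ (φ n)) := aux_div_comp hγ hφ.injective
      have hγ₁inv : DivergesToInfinity (fun n => (γ (φ n))⁻¹) := aux_div_inv hγ₁
      -- pigeonhole forward
      have Hfwd : ∀ i j k : Fin 5, i ≠ j → i ≠ k → j ≠ k →
          ((L i).1 = (L j).1 ∨ (L i).1 = (L k).1 ∨ (L j).1 = (L k).1) := by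
        intro i j k hij hik hjk
        by_contra hcon
        push_neg at hcon
        obtain ⟨h1, h2, h3⟩ := hcon
        exact aux_keyL hPD (fun n => γ (φ n)) hγ₁ (fun _ => (t i, t j, t k))
          (fun n => (γ (φ n) • t i, γ (φ n) • t j, γ (φ n) • t k)) (fun n => rfl)
          (fun _ => ⟨ht.ne hij, ht.ne hik, ht.ne hjk⟩)
          ⟨ht.ne hij, ht.ne hik, ht.ne hjk⟩ ⟨h1, h2, h3⟩ tendsto_const_nhds
          ((hA i).prodMk_nhds ((hA j).prodMk_nhds (hA k)))
      have Hbwd : ∀ i j k : Fin 5, i ≠ j → i ≠ k → j ≠ k →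
          ((L i).2 = (L j).2 ∨ (L i).2 = (L k).2 ∨ (L j).2 = (L k).2) := by
        intro i j k hij hik hjk
        by_contra hcon
        push_neg at hcon
        obtain ⟨h1, h2, h3⟩ := hcon
        exact aux_keyL hPD (fun n => (γ (φ n))⁻¹) hγ₁inv (fun _ => (t i, t j, t k))
          (fun n => ((γ (φ n))⁻¹ • t i, (γ (φ n))⁻¹ • t j, (γ (φ n))⁻¹ • t k)) (fun n => rfl)
          (fun _ => ⟨ht.ne hij, ht.ne hik, ht.ne hjk⟩)
          ⟨ht.ne hij, ht.ne hik, ht.ne hjk⟩ ⟨h1, h2, h3⟩ tendsto_const_nhds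
          ((hB i).prodMk_nhds ((hB j).prodMk_nhds (hB k)))
      obtain ⟨i₁, j₁, k₁, hij₁, hik₁, hjk₁, e1, e2⟩ := aux_pigeon5 (fun i => (L i).1) Hfwd
      obtain ⟨i₂, j₂, k₂, hij₂, hik₂, hjk₂, f1, f2⟩ := aux_pigeon5 (fun i => (L i).2) Hbwd
      set zp := (L i₁).1 with hzp
      set zm := (L i₂).2 with hzm
      -- attracted points
      have hAu1 : Tendsto (fun n => γ (φ n) • t i₁) atTop (𝓝 zp) := hA i₁
      have hAu2 : Tendsto (fun n => γ (φ n) • t j₁) atTop (𝓝 zp) := by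
        have h := hA j₁; rwa [← e1] at h
      have hAu3 : Tendsto (fun n => γ (φ n) • t k₁) atTop (𝓝 zp) := by
        have h := hA k₁; rwa [← e2] at h
      have hBw1 : Tendsto (fun n => (γ (φ n))⁻¹ • t i₂) atTop (𝓝 zm) := hB i₂
      have hBw2 : Tendsto (fun n => (γ (φ n))⁻¹ • t j₂) atTop (𝓝 zm) := by
        have h := hB j₂; rwa [← f1] at h
      have hBw3 : Tendsto (fun n => (γ (φ n))⁻¹ • t k₂) atTop (𝓝 zm) := by
        have h := hB k₂; rwa [← f2] at h
      refine ⟨zp, zm, φ, hφ, ?_⟩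
      intro K hKc hKsub
      by_contra hcon
      rw [Metric.tendstoUniformlyOn_iff] at hcon
      push_neg at hcon
      obtain ⟨ε, hε, hcon2⟩ := hcon
      have hfreq : ∃ᶠ n in atTop, ∃ x ∈ K, ε ≤ dist zp (γ (φ n) • x) := by
        exact hcon2
      obtain ⟨ψ, hψ, hψP⟩ := Filter.extraction_of_frequently_atTop hfreq
      choose x hxK hxd using hψP
      obtain ⟨xL, hxLK, ψ₂, hψ₂, hx2⟩ := hKc.tendsto_subseq hxK
      obtain ⟨x', -, ψ₃, hψ₃, hy3⟩ := isCompact_univ.tendsto_subseq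
        (fun j => Set.mem_univ ((fun j => γ (φ (ψ (ψ₂ j))) • x (ψ₂ j)) j))
      set ρ : ℕ → ℕ := fun j => ψ (ψ₂ (ψ₃ j)) with hρdef
      have hρ : StrictMono ρ := hψ.comp (hψ₂.comp hψ₃)
      set X : ℕ → Z := fun j => x (ψ₂ (ψ₃ j)) with hXdef
      have hX : Tendsto X atTop (𝓝 xL) := hx2.comp hψ₃.tendsto_atTop
      have hY : Tendsto (fun j => γ (φ (ρ j)) • X j) atTop (𝓝 x') := hy3
      have hεx' : ε ≤ dist zp x' := by
        have hd : Tendsto (fun j => dist zp (γ (φ (ρ j)) • X j)) atTop (𝓝 (dist zp x')) :=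
          tendsto_const_nhds.dist hY
        exact ge_of_tendsto' hd (fun j => hxd (ψ₂ (ψ₃ j)))
      have hx'zp : x' ≠ zp := by
        intro h
        rw [h, dist_self] at hεx'
        linarith
      have hxLzm : xL ≠ zm := hKsub hxLK
      obtain ⟨u, hu_mem, hux, huzm⟩ :=
        aux_choose3 (a := t i₁) (b := t j₁) (c := t k₁) (p := xL) (q := zm)
          (ht.ne hij₁) (ht.ne hik₁) (ht.ne hjk₁)
      have hAu : Tendsto (fun n => γ (φ n) • u) atTop (𝓝 zp) := by
        rcases hu_mem with rfl | rfl | rfl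
        · exact hAu1
        · exact hAu2
        · exact hAu3
      obtain ⟨w, hw_mem, hwx', hwzp⟩ :=
        aux_choose3 (a := t i₂) (b := t j₂) (c := t k₂) (p := x') (q := zp)
          (ht.ne hij₂) (ht.ne hik₂) (ht.ne hjk₂)
      have hBw : Tendsto (fun n => (γ (φ n))⁻¹ • w) atTop (𝓝 zm) := by
        rcases hw_mem with rfl | rfl | rfl
        · exact hBw1
        · exact hBw2
        · exact hBw3
      have hAuρ : Tendsto (fun j => γ (φ (ρ j)) • u) atTop (𝓝 zp) :=
        hAu.comp hρ.tendsto_atTop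
      have hBwρ : Tendsto (fun j => (γ (φ (ρ j)))⁻¹ • w) atTop (𝓝 zm) :=
        hBw.comp hρ.tendsto_atTop
      have hev1 : ∀ᶠ j in atTop, X j ≠ u :=
        aux_ev_ne hX tendsto_const_nhds (Ne.symm hux)
      have hev2 : ∀ᶠ j in atTop, X j ≠ (γ (φ (ρ j)))⁻¹ • w :=
        aux_ev_ne hX hBwρ hxLzm
      have hev3 : ∀ᶠ j in atTop, u ≠ (γ (φ (ρ j)))⁻¹ • w :=
        aux_ev_ne tendsto_const_nhds hBwρ huzm
      obtain ⟨N, hN⟩ := eventually_atTop.1 ((hev1.and hev2).and hev3)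
      have hshift : StrictMono (fun j : ℕ => j + N) := aux_shift_mono N
      have hshiftT : Tendsto (fun j : ℕ => j + N) atTop atTop := hshift.tendsto_atTop
      refine aux_keyL hPD (fun j => γ (φ (ρ (j + N))))
        (aux_div_comp hγ (hφ.comp (hρ.comp hshift)).injective)
        (fun j => (X (j + N), u, (γ (φ (ρ (j + N))))⁻¹ • w))
        (fun j => (γ (φ (ρ (j + N))) • X (j + N), γ (φ (ρ (j + N))) • u, w))
        (fun j => ?_) (fun j => ?_)
        (P := (xL, u, zm)) (Q := (x', zp, w))
        ⟨Ne.symm hux, hxLzm, huzm⟩ ⟨hx'zp, Ne.symm hwx', Ne.symm hwzp⟩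
        ?_ ?_
      · simp only [smul_inv_smul]
      · obtain ⟨⟨g1, g2⟩, g3⟩ := hN (j + N) (Nat.le_add_left N j)
        exact ⟨g1, g2, g3⟩
      · exact (hX.comp hshiftT).prodMk_nhds
          (tendsto_const_nhds.prodMk_nhds (hBwρ.comp hshiftT))
      · exact (hY.comp hshiftT).prodMk_nhds
          ((hAuρ.comp hshiftT).prodMk_nhds tendsto_const_nhds)
  · -- easy direction
    intro h K hKsub hKc
    by_contra hinf
    set S : Set G :=
      {γ : G | ((fun p : Z × Z × Z => (γ • p.1, γ • p.2.1, γ • p.2.2)) '' K ∩ K).Nonempty}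
      with hSdef
    have hSinf : S.Infinite := hinf
    set e := Set.Infinite.natEmbedding S hSinf with he
    set γs : ℕ → G := fun n => (e n : G) with hγs
    have hγsmem : ∀ n, γs n ∈ S := fun n => (e n).2
    have hγsinj : Function.Injective γs :=
      Function.Injective.comp Subtype.val_injective e.injective
    have hdiv : DivergesToInfinity γs := by
      intro F
      exact Set.Finite.preimage hγsinj.injOn F.finite_toSet
    obtain ⟨zp, zm, k, hk, hU⟩ := h γs hdiv
    have hpick : ∀ j : ℕ, ∃ pp ∈ K,
        (γs (k j) • pp.1, γs (k j) • pp.2.1, γs (k j) • pp.2.2) ∈ K := by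
      intro j
      obtain ⟨yy, ⟨pp, hpK, hpe⟩, hyK⟩ := hγsmem (k j)
      have hpe' : (γs (k j) • pp.1, γs (k j) • pp.2.1, γs (k j) • pp.2.2) = yy := hpe
      exact ⟨pp, hpK, hpe' ▸ hyK⟩
    choose p hpK hpqK using hpick
    obtain ⟨PL, hPLK, ψ₂, hψ₂, hP2⟩ := hKc.tendsto_subseq hpK
    set q : ℕ → Z × Z × Z := fun j =>
      (γs (k (ψ₂ j)) • (p (ψ₂ j)).1, γs (k (ψ₂ j)) • (p (ψ₂ j)).2.1,
        γs (k (ψ₂ j)) • (p (ψ₂ j)).2.2) with hqdef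
    have hqK : ∀ j, q j ∈ K := fun j => hpqK (ψ₂ j)
    obtain ⟨QL, hQLK, ψ₃, hψ₃, hQ3⟩ := hKc.tendsto_subseq hqK
    have key : ∀ π : Z × Z × Z → Z, Continuous π →
        (∀ (g : G) (pp : Z × Z × Z), π (g • pp.1, g • pp.2.1, g • pp.2.2) = g • π pp) →
        π PL ≠ zm → π QL = zp := by
      intro π hπc hπcomm hne
      have hξ0 : Tendsto (fun j => π (p (ψ₂ (ψ₃ j)))) atTop (𝓝 (π PL)) :=
        (hπc.tendsto PL).comp (hP2.comp hψ₃.tendsto_atTop)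
      have hev : ∀ᶠ j in atTop, π (p (ψ₂ (ψ₃ j))) ≠ zm :=
        aux_ev_ne hξ0 tendsto_const_nhds hne
      obtain ⟨N, hN⟩ := eventually_atTop.1 hev
      set ξ : ℕ → Z := fun j => π (p (ψ₂ (ψ₃ (j + N)))) with hξdef
      have hshiftT : Tendsto (fun j : ℕ => j + N) atTop atTop :=
        (aux_shift_mono N).tendsto_atTop
      have hξ : Tendsto ξ atTop (𝓝 (π PL)) := hξ0.comp hshiftT
      have hC : IsCompact (insert (π PL) (Set.range ξ)) := hξ.isCompact_insert_range
      have hCsub : insert (π PL) (Set.range ξ) ⊆ {zm}ᶜ := by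
        intro z hz
        rcases Set.mem_insert_iff.1 hz with rfl | ⟨j, rfl⟩
        · exact hne
        · exact hN (j + N) (Nat.le_add_left N j)
      have hUC := hU _ hC hCsub
      rw [Metric.tendstoUniformlyOn_iff] at hUC
      have hlim2 : Tendsto (fun j => γs (k (ψ₂ (ψ₃ (j + N)))) • ξ j) atTop (𝓝 zp) := by
        rw [Metric.tendsto_atTop]
        intro ε hε
        have h1 := hUC ε hε
        have h2 : Tendsto (fun j => ψ₂ (ψ₃ (j + N))) atTop atTop :=
          ((hψ₂.comp hψ₃).comp (aux_shift_mono N)).tendsto_atTop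
        obtain ⟨M, hM⟩ := eventually_atTop.1 (h2.eventually h1)
        refine ⟨M, fun j hj => ?_⟩
        rw [dist_comm]
        exact hM j hj (ξ j) (Set.mem_insert_of_mem _ ⟨j, rfl⟩)
      have hlim3 : Tendsto (fun j => γs (k (ψ₂ (ψ₃ (j + N)))) • ξ j) atTop (𝓝 (π QL)) := by
        have heq : (fun j => γs (k (ψ₂ (ψ₃ (j + N)))) • ξ j)
            = fun j => π (q (ψ₃ (j + N))) := by
          funext j
          rw [hqdef]
          exact (hπcomm _ _).symm
        rw [heq]
        exact ((hπc.tendsto QL).comp hQ3).comp hshiftT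
      exact tendsto_nhds_unique hlim3 hlim2
    obtain ⟨hQ1, hQ2, hQ3'⟩ := hKsub hQLK
    obtain ⟨hP1, hP2', hP3'⟩ := hKsub hPLK
    by_cases h1 : PL.1 = zm
    · have hne1 : PL.2.1 ≠ zm := fun hh => hP1 (h1.trans hh.symm)
      have hne2 : PL.2.2 ≠ zm := fun hh => hP2' (h1.trans hh.symm)
      have g1 := key (fun pp => pp.2.1) (continuous_fst.comp continuous_snd)
        (fun g pp => rfl) hne1
      have g2 := key (fun pp => pp.2.2) (continuous_snd.comp continuous_snd)
        (fun g pp => rfl) hne2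
      exact hQ3' (g1.trans g2.symm)
    · by_cases h2 : PL.2.1 = zm
      · have hne2 : PL.2.2 ≠ zm := fun hh => hP3' (h2.trans hh.symm)
        have g1 := key Prod.fst continuous_fst (fun g pp => rfl) h1
        have g2 := key (fun pp => pp.2.2) (continuous_snd.comp continuous_snd)
          (fun g pp => rfl) hne2
        exact hQ2 (g1.trans g2.symm)
      · have g1 := key Prod.fst continuous_fst (fun g pp => rfl) h1
        have g2 := key (fun pp => pp.2.1) (continuous_fst.comp continuous_snd)
          (fun g pp => rfl) h2
        exact hQ1 (g1.trans g2.symm)
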